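/- For every n ∈ ℕ with n ≥ 1, the function ψ_n(x) = x / √(log(e³/(n x²))) is increasing and convex on the interval (0, 1/√n), and for all 0 < u ≤ v < 1/√n it satisfies ψ_n(v) ≤ ψ_n(u) + 2(v − u) / √(log(e³ / (n·((v+u)/2)²))). -/

import Mathlib

noncomputable def psiN (n : ℕ) (x : ℝ) : ℝ :=
  x / Real.sqrt (Real.log (Real.exp 1 ^ 3 / ((n : ℝ) * x ^ 2)))

namespace PsiAux

noncomputable def ell (n : ℕ) (x : ℝ) : ℝ := 3 - Real.log n - 2 * Real.log x

variable {n : ℕ}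

lemma log_eq (hn : 1 ≤ n) {x : ℝ} (hx : 0 < x) :
    Real.log (Real.exp 1 ^ 3 / ((n : ℝ) * x ^ 2)) = ell n x := by
  have hn0 : (0:ℝ) < n := by exact_mod_cast hn
  rw [Real.log_div (by positivity) (by positivity), Real.log_mul hn0.ne' (by positivity),
    Real.log_pow, Real.log_pow, Real.log_exp, ell]
  push_cast; ring

lemma psi_eq (hn : 1 ≤ n) {x : ℝ} (hx : 0 < x) :
    psiN n x = x / Real.sqrt (ell n x) := by
  rw [psiN, log_eq hn hx]

lemma ell_ge (hn : 1 ≤ n) {x : ℝ} (hx : x ∈ Set.Ioo (0:ℝ) (1 / Real.sqrt n)) :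
    3 ≤ ell n x := by
  have hn0 : (1:ℝ) ≤ n := by exact_mod_cast hn
  have hsn : 0 < Real.sqrt n := Real.sqrt_pos.2 (by linarith)
  have hlog : Real.log x ≤ Real.log (1 / Real.sqrt n) :=
    Real.log_le_log hx.1 hx.2.le
  rw [one_div, Real.log_inv, Real.log_sqrt (by linarith)] at hlog
  simp only [ell]
  linarith

lemma ell_pos (hn : 1 ≤ n) {x : ℝ} (hx : x ∈ Set.Ioo (0:ℝ) (1 / Real.sqrt n)) :
    0 < ell n x := lt_of_lt_of_le (by norm_num) (ell_ge hn hx)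

lemma hasDerivAt_ell {x : ℝ} (hx : 0 < x) :
    HasDerivAt (ell n) (-2 / x) x := by
  have h := ((Real.hasDerivAt_log hx.ne').const_mul (2:ℝ)).const_sub (3 - Real.log n)
  have hx2 : -2 / x = -(2 * x⁻¹) := by field_simp
  rw [hx2]
  exact h

lemma hasDerivAt_sqrt_ell {x : ℝ} (hx : 0 < x) (hl : 0 < ell n x) :
    HasDerivAt (fun y => Real.sqrt (ell n y)) (-2 / x / (2 * Real.sqrt (ell n x))) x :=
  (hasDerivAt_ell hx).sqrt hl.ne'

lemma hasDerivAt_g {x : ℝ} (hx : 0 < x) (hl : 0 < ell n x) :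
    HasDerivAt (fun y => (Real.sqrt (ell n y))⁻¹)
      ((x * (ell n x * Real.sqrt (ell n x)))⁻¹) x := by
  have hs : 0 < Real.sqrt (ell n x) := Real.sqrt_pos.2 hl
  have h := (hasDerivAt_sqrt_ell hx hl).inv hs.ne'
  refine h.congr_deriv (Eq.symm ?_)
  have hss : Real.sqrt (ell n x) * Real.sqrt (ell n x) = ell n x :=
    Real.mul_self_sqrt hl.le
  rw [Real.sq_sqrt hl.le]
  rw [div_div]
  field_simp

lemma hasDerivAt_psi {x : ℝ} (hx : 0 < x) (hl : 0 < ell n x) :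
    HasDerivAt (fun y => y / Real.sqrt (ell n y))
      ((Real.sqrt (ell n x))⁻¹ + (ell n x * Real.sqrt (ell n x))⁻¹) x := by
  have hs : 0 < Real.sqrt (ell n x) := Real.sqrt_pos.2 hl
  have h := (hasDerivAt_id x).mul (hasDerivAt_g hx hl)
  simp only [div_eq_mul_inv]
  refine h.congr_deriv (Eq.symm ?_)
  simp only [id_eq, one_mul]
  field_simp

lemma hasDerivAt_k {x : ℝ} (hx : 0 < x) (hl : 0 < ell n x) :
    HasDerivAt (fun y => y * (ell n y * Real.sqrt (ell n y)))
      (Real.sqrt (ell n x) * (ell n x - 3)) x := by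
  have hs : 0 < Real.sqrt (ell n x) := Real.sqrt_pos.2 hl
  have hK := (hasDerivAt_ell (n := n) hx).mul (hasDerivAt_sqrt_ell hx hl)
  have h := (hasDerivAt_id x).mul hK
  refine h.congr_deriv (Eq.symm ?_)
  have hss : Real.sqrt (ell n x) * Real.sqrt (ell n x) = ell n x :=
    Real.mul_self_sqrt hl.le
  simp only [id_eq, Pi.mul_apply]
  field_simp
  linear_combination (-1) * hss

lemma hasDerivAt_f {x : ℝ} (hx : 0 < x) :
    HasDerivAt (fun y => y ^ 2 * ell n y) (2 * x * (ell n x - 1)) x := by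
  have h := (hasDerivAt_pow 2 x).mul (hasDerivAt_ell (n := n) hx)
  refine h.congr_deriv (Eq.symm ?_)
  field_simp
  ring

lemma ell_antitone (hn : 1 ≤ n) {x y : ℝ} (hx : 0 < x) (hxy : x ≤ y) :
    ell n y ≤ ell n x := by
  have := Real.log_le_log hx hxy
  simp only [ell]; linarith

/-- derivative of psi, as a function of `t = ell x`. -/
lemma D_antitone {a b : ℝ} (ha : 0 < a) (hab : a ≤ b) :
    (Real.sqrt b)⁻¹ + (b * Real.sqrt b)⁻¹ ≤ (Real.sqrt a)⁻¹ + (a * Real.sqrt a)⁻¹ := by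
  have hsa : 0 < Real.sqrt a := Real.sqrt_pos.2 ha
  have hsab : Real.sqrt a ≤ Real.sqrt b := Real.sqrt_le_sqrt hab
  have h1 : (Real.sqrt b)⁻¹ ≤ (Real.sqrt a)⁻¹ := by
    apply inv_anti₀ hsa hsab
  have h2 : (b * Real.sqrt b)⁻¹ ≤ (a * Real.sqrt a)⁻¹ := by
    apply inv_anti₀ (by positivity)
    exact mul_le_mul hab hsab hsa.le (by linarith)
  linarith

lemma hasDerivAt_psiN (hn : 1 ≤ n) {x : ℝ} (hx : x ∈ Set.Ioo (0:ℝ) (1 / Real.sqrt n)) :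
    HasDerivAt (psiN n)
      ((Real.sqrt (ell n x))⁻¹ + (ell n x * Real.sqrt (ell n x))⁻¹) x := by
  have h := hasDerivAt_psi hx.1 (ell_pos hn hx)
  apply h.congr_of_eventuallyEq
  filter_upwards [eventually_gt_nhds hx.1] with y hy
  exact psi_eq hn hy

lemma k_mono (hn : 1 ≤ n) :
    MonotoneOn (fun y => y * (ell n y * Real.sqrt (ell n y)))
      (Set.Ioo (0:ℝ) (1 / Real.sqrt n)) := by
  apply monotoneOn_of_hasDerivWithinAt_nonneg (convex_Ioo _ _)
    (f' := fun x => Real.sqrt (ell n x) * (ell n x - 3))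
  · intro x hx
    exact ((hasDerivAt_k hx.1 (ell_pos hn hx)).continuousAt).continuousWithinAt
  · intro x hx
    rw [interior_Ioo] at hx
    exact (hasDerivAt_k hx.1 (ell_pos hn hx)).hasDerivWithinAt
  · intro x hx
    rw [interior_Ioo] at hx
    have h3 := ell_ge hn hx
    have := Real.sqrt_nonneg (ell n x)
    nlinarith

lemma f_mono (hn : 1 ≤ n) :
    MonotoneOn (fun y => y ^ 2 * ell n y) (Set.Ioo (0:ℝ) (1 / Real.sqrt n)) := by
  apply monotoneOn_of_hasDerivWithinAt_nonneg (convex_Ioo _ _)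
    (f' := fun x => 2 * x * (ell n x - 1))
  · intro x hx
    exact ((hasDerivAt_f (n := n) hx.1).continuousAt).continuousWithinAt
  · intro x hx
    rw [interior_Ioo] at hx
    exact (hasDerivAt_f hx.1).hasDerivWithinAt
  · intro x hx
    rw [interior_Ioo] at hx
    have h3 := ell_ge hn hx
    nlinarith [hx.1]

lemma G_concave (hn : 1 ≤ n) :
    ConcaveOn ℝ (Set.Ioo (0:ℝ) (1 / Real.sqrt n))
      (fun y => (Real.sqrt (ell n y))⁻¹) := by
  apply AntitoneOn.concaveOn_of_deriv (convex_Ioo _ _)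
  · intro x hx
    exact ((hasDerivAt_g hx.1 (ell_pos hn hx)).continuousAt).continuousWithinAt
  · intro x hx
    rw [interior_Ioo] at hx
    exact ((hasDerivAt_g hx.1 (ell_pos hn hx)).differentiableAt).differentiableWithinAt
  · intro x hx y hy hxy
    rw [interior_Ioo] at hx hy
    rw [(hasDerivAt_g hx.1 (ell_pos hn hx)).deriv,
      (hasDerivAt_g hy.1 (ell_pos hn hy)).deriv]
    apply inv_anti₀
    · exact mul_pos hx.1 (mul_pos (ell_pos hn hx) (Real.sqrt_pos.2 (ell_pos hn hx)))
    · exact k_mono hn hx hy hxy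

end PsiAux

theorem psiN_increasing_convex (n : ℕ) (hn : 1 ≤ n) :
    StrictMonoOn (psiN n) (Set.Ioo (0 : ℝ) (1 / Real.sqrt n)) ∧
    ConvexOn ℝ (Set.Ioo (0 : ℝ) (1 / Real.sqrt n)) (psiN n) ∧
    ∀ u v : ℝ, 0 < u → u ≤ v → v < 1 / Real.sqrt n →
      psiN n v ≤ psiN n u + 2 * (v - u) /
        Real.sqrt (Real.log (Real.exp 1 ^ 3 / ((n : ℝ) * ((v + u) / 2) ^ 2))) := by
  open PsiAux in
  have contOn : ContinuousOn (psiN n) (Set.Ioo (0:ℝ) (1 / Real.sqrt n)) :=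
    fun x hx => (hasDerivAt_psiN hn hx).continuousAt.continuousWithinAt
  refine ⟨?_, ?_, ?_⟩
  · apply strictMonoOn_of_deriv_pos (convex_Ioo _ _) contOn
    intro x hx
    rw [interior_Ioo] at hx
    rw [(hasDerivAt_psiN hn hx).deriv]
    have hl := ell_pos hn hx
    have hs : 0 < Real.sqrt (ell n x) := Real.sqrt_pos.2 hl
    positivity
  · apply MonotoneOn.convexOn_of_deriv (convex_Ioo _ _) contOn
    · intro x hx
      rw [interior_Ioo] at hx
      exact (hasDerivAt_psiN hn hx).differentiableAt.differentiableWithinAt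
    · intro x hx y hy hxy
      rw [interior_Ioo] at hx hy
      rw [(hasDerivAt_psiN hn hx).deriv, (hasDerivAt_psiN hn hy).deriv]
      exact D_antitone (ell_pos hn hy) (ell_antitone hn hx.1 hxy)
  · intro u v hu huv hv
    have hvs : v ∈ Set.Ioo (0:ℝ) (1 / Real.sqrt n) := ⟨lt_of_lt_of_le hu huv, hv⟩
    have hus : u ∈ Set.Ioo (0:ℝ) (1 / Real.sqrt n) := ⟨hu, lt_of_le_of_lt huv hv⟩
    have hm0 : 0 < (v + u) / 2 := by linarith
    have hms : (v + u) / 2 ∈ Set.Ioo (0:ℝ) (1 / Real.sqrt n) :=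
      ⟨hm0, by linarith [hvs.2]⟩
    rw [psi_eq hn hu, psi_eq hn hvs.1, log_eq hn hm0]
    have hlu := ell_pos hn hus
    have hlv := ell_pos hn hvs
    have hlm := ell_pos hn hms
    have hsu : 0 < Real.sqrt (ell n u) := Real.sqrt_pos.2 hlu
    have hsv : 0 < Real.sqrt (ell n v) := Real.sqrt_pos.2 hlv
    have hsm : 0 < Real.sqrt (ell n ((v + u) / 2)) := Real.sqrt_pos.2 hlm
    -- step 1 : u * √ℓu ≤ v * √ℓv
    have h1 : u * Real.sqrt (ell n u) ≤ v * Real.sqrt (ell n v) := by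
      have := Real.sqrt_le_sqrt (f_mono hn hus hvs huv)
      rwa [Real.sqrt_mul (sq_nonneg u), Real.sqrt_mul (sq_nonneg v),
        Real.sqrt_sq hu.le, Real.sqrt_sq hvs.1.le] at this
    -- step 2 : u / √ℓv ≤ v / √ℓu
    have h2 : u * (Real.sqrt (ell n v))⁻¹ ≤ v * (Real.sqrt (ell n u))⁻¹ := by
      rw [← div_eq_mul_inv, ← div_eq_mul_inv, div_le_div_iff₀ hsv hsu]
      linarith [h1]
    -- step 3 : midpoint concavity
    have h3 : (Real.sqrt (ell n u))⁻¹ + (Real.sqrt (ell n v))⁻¹ ≤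
        2 * (Real.sqrt (ell n ((v + u) / 2)))⁻¹ := by
      have := (G_concave hn).2 hus hvs (by norm_num : (0:ℝ) ≤ 1/2)
        (by norm_num : (0:ℝ) ≤ 1/2) (by norm_num)
      simp only [smul_eq_mul] at this
      have hmeq : (1:ℝ)/2 * u + 1/2 * v = (v + u) / 2 := by ring
      rw [hmeq] at this
      linarith
    rw [div_eq_mul_inv, div_eq_mul_inv, div_eq_mul_inv]
    nlinarith [mul_le_mul_of_nonneg_left h3 (sub_nonneg.2 huv), h2]
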